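/- Let M be a module over ℤ equipped with a symmetric bilinear form B, and let h, a, b, c ∈ M satisfy B(h,h) = 3, B(h,a) = B(h,b) = B(h,c) = 0, B(a,a) = B(b,b) = B(c,c) = 4, B(b,c) = 1, B(a,b) = 2 and B(a,c) = 1. Then there exists a matrix P ∈ M₃(ℤ) with det P a unit of ℤ such that Pᵀ · [[3,6,0],[6,18,1],[0,1,4]] · P equals the Gram matrix of the triple (h, a, b − c); that is, the lattice spanned by (h, a, b − c) is isometric over ℤ to the lattice K_{0,4} with Gram matrix [[3,6,0],[6,18,1],[0,1,4]]. -/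

import Mathlib

/-- The lattice spanned by `(h, a, b - c)` is isometric over `ℤ` to the
lattice `K_{0,4}` with Gram matrix `[[3,6,0],[6,18,1],[0,1,4]]`: there is an integral
base-change matrix `P` with unit determinant carrying the latter Gram matrix to the former. -/
theorem triple_isometric_K04
    (M : Type*) [AddCommGroup M] [Module ℤ M]
    (B : M →ₗ[ℤ] M →ₗ[ℤ] ℤ) (hsymm : ∀ x y : M, B x y = B y x)
    (h a b c : M)
    (hhh : B h h = 3) (hha : B h a = 0) (hhb : B h b = 0) (hhc : B h c = 0)
    (haa : B a a = 4) (hbb : B b b = 4) (hcc : B c c = 4)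
    (hbc : B b c = 1) (hab : B a b = 2) (hac : B a c = 1) :
    ∃ P : Matrix (Fin 3) (Fin 3) ℤ, IsUnit P.det ∧
      P.transpose * !![3, 6, 0; 6, 18, 1; 0, 1, 4] * P =
        (Matrix.of fun r s : Fin 3 => B (![h, a, b - c] r) (![h, a, b - c] s)) := by
  have hah : B a h = 0 := by rw [hsymm]; exact hha
  have hbh : B b h = 0 := by rw [hsymm]; exact hhb
  have hch : B c h = 0 := by rw [hsymm]; exact hhc
  have hba : B b a = 2 := by rw [hsymm]; exact hab
  have hca : B c a = 1 := by rw [hsymm]; exact hac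
  have hcb : B c b = 1 := by rw [hsymm]; exact hbc
  refine ⟨!![-1,0,2; 0,0,-1; 0,-1,0], ?_, ?_⟩
  · rw [Matrix.det_fin_three]; norm_num; simp only [Int.isUnit_iff]; decide
  · have hgram : (Matrix.of fun r s : Fin 3 => B (![h, a, b - c] r) (![h, a, b - c] s))
        = !![3,0,0; 0,4,1; 0,1,6] := by
      ext i j
      fin_cases i <;> fin_cases j <;>
        simp [map_sub, LinearMap.sub_apply, hhh, hha, hhb, hhc, haa, hbb, hcc, hbc,
          hab, hac, hah, hbh, hch, hba, hca, hcb, Matrix.vecHead, Matrix.vecTail]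
    rw [hgram]
    decide
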